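/- For every topological space X and every subset A of X, the cardinality of the θ-closure of A satisfies |cl_θ(A)| ≤ |A|^{κ(X)} · nu(X). -/

import Mathlib

open Set Topology Cardinal

universe u

variable {X : Type u}

/-- The θ-closure of a set. -/
def thetaCl [TopologicalSpace X] (A : Set X) : Set X :=
  {x | ∀ U : Set X, IsOpen U → x ∈ U → (closure U ∩ A).Nonempty}

/-- The θ-closed hull of a set. -/
def thetaHull [TopologicalSpace X] (A : Set X) : Set X :=
  ⋂₀ {C : Set X | thetaCl C = C ∧ A ⊆ C}

/-- A nonempty set is finitely non-Urysohn if every finite choice of closed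
neighborhoods (closures of open neighborhoods) of finitely many of its points
has nonempty intersection. -/
def FinNonUrysohn [TopologicalSpace X] (A : Set X) : Prop :=
  A.Nonempty ∧ ∀ F : Set X, F ⊆ A → F.Nonempty → F.Finite →
    ∀ U : X → Set X, (∀ x ∈ F, IsOpen (U x) ∧ x ∈ U x) →
      (⋂ x ∈ F, closure (U x)).Nonempty

/-- The non-Urysohn number `nu(X)`. -/
noncomputable def nuNumber (X : Type u) [TopologicalSpace X] : Cardinal.{u} :=
  1 + ⨆ A : {A : Set X // FinNonUrysohn A}, #↥A.1

/-- The Urysohn number `U(X)`. -/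
noncomputable def UrysohnNumber (X : Type u) [TopologicalSpace X] : Cardinal.{u} :=
  sInf {κ : Cardinal.{u} | ∀ A : Set X, κ ≤ #↥A → ∃ U : X → Set X,
    (∀ a ∈ A, IsOpen (U a) ∧ a ∈ U a) ∧ (⋂ a ∈ A, closure (U a)) = ∅}

/-- The cardinal function `κ(X)`: the smallest infinite cardinal such that each
point has a family of at most that many closed neighborhoods cofinal (under
reverse inclusion) in the closures of its open neighborhoods. -/
noncomputable def kappaInv (X : Type u) [TopologicalSpace X] : Cardinal.{u} :=
  sInf {κ : Cardinal.{u} | ℵ₀ ≤ κ ∧ ∀ x : X, ∃ V : Set (Set X), #↥V ≤ κ ∧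
    (∀ W ∈ V, IsClosed W ∧ W ∈ nhds x) ∧
    ∀ U : Set X, IsOpen U → x ∈ U → ∃ W ∈ V, W ⊆ closure U}

/-- The character `χ(X)`. -/
noncomputable def chiChar (X : Type u) [TopologicalSpace X] : Cardinal.{u} :=
  sInf {κ : Cardinal.{u} | ℵ₀ ≤ κ ∧ ∀ x : X, ∃ B : Set (Set X), #↥B ≤ κ ∧
    (∀ U ∈ B, U ∈ nhds x) ∧ ∀ S ∈ nhds x, ∃ U ∈ B, U ⊆ S}

/-- The θ-density `d_θ(X)`. -/
noncomputable def dTheta (X : Type u) [TopologicalSpace X] : Cardinal.{u} :=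
  sInf {c : Cardinal.{u} | ∃ A : Set X, thetaCl A = Set.univ ∧ #↥A = c}

/-- The cardinal function `sL_θ(X)`. -/
noncomputable def sLtheta (X : Type u) [TopologicalSpace X] : Cardinal.{u} :=
  sInf {τ : Cardinal.{u} | ℵ₀ ≤ τ ∧ ∀ A : Set X, ∀ 𝒰 : Set (Set X),
    (∀ U ∈ 𝒰, IsOpen U) → thetaCl A ⊆ ⋃₀ 𝒰 →
    ∃ 𝒱 ⊆ 𝒰, #↥𝒱 ≤ τ ∧ A ⊆ closure (⋃₀ 𝒱)}

/-- The cardinal function `wL_c(X)`. -/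
noncomputable def wLc (X : Type u) [TopologicalSpace X] : Cardinal.{u} :=
  sInf {τ : Cardinal.{u} | ℵ₀ ≤ τ ∧ ∀ A : Set X, IsClosed A → ∀ 𝒰 : Set (Set X),
    (∀ U ∈ 𝒰, IsOpen U) → A ⊆ ⋃₀ 𝒰 →
    ∃ 𝒱 ⊆ 𝒰, #↥𝒱 ≤ τ ∧ A ⊆ closure (⋃₀ 𝒱)}

/-- The almost Lindelöf degree `aL(X)`. -/
noncomputable def aLdeg (X : Type u) [TopologicalSpace X] : Cardinal.{u} :=
  sInf {τ : Cardinal.{u} | ℵ₀ ≤ τ ∧ ∀ 𝒰 : Set (Set X),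
    (∀ U ∈ 𝒰, IsOpen U) → ⋃₀ 𝒰 = Set.univ →
    ∃ 𝒱 ⊆ 𝒰, #↥𝒱 ≤ τ ∧ (⋃ V ∈ 𝒱, closure V) = Set.univ}

/-- `X` is a Urysohn space: distinct points have open neighborhoods with
disjoint closures. -/
def UrysohnSpace (X : Type u) [TopologicalSpace X] : Prop :=
  ∀ x y : X, x ≠ y → ∃ U V : Set X, IsOpen U ∧ IsOpen V ∧ x ∈ U ∧ y ∈ V ∧
    closure U ∩ closure V = ∅

/-- For a set `S`, the intersection over all choices of closed neighborhoods of
the points of `S` of the θ-closures of the intersections of the choices. -/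
def capSet [TopologicalSpace X] (S : Set X) : Set X :=
  {y | ∀ U : X → Set X, (∀ a ∈ S, IsOpen (U a) ∧ a ∈ U a) →
    y ∈ thetaCl (⋂ a ∈ S, closure (U a))}

/-- For a set `M`, the intersection over all nonempty finite `F ⊆ M` and all
choices of open neighborhoods of points of `F` of
`cl_θ(⋂_{x∈F} closure (U x))`. -/
def fnuCap [TopologicalSpace X] (M : Set X) : Set X :=
  {y | ∀ F : Set X, F ⊆ M → F.Nonempty → F.Finite → ∀ U : X → Set X,
    (∀ x ∈ F, IsOpen (U x) ∧ x ∈ U x) →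
    y ∈ thetaCl (⋂ x ∈ F, closure (U x))}


section Aux

variable [TopologicalSpace X]

lemma aux_mk_le_nu {S : Set X} (h : FinNonUrysohn S) : #↥S ≤ nuNumber X := by
  have h1 : #↥S ≤ ⨆ A : {A : Set X // FinNonUrysohn A}, #↥A.1 :=
    le_ciSup (Cardinal.bddAbove_range _) (⟨S, h⟩ : {A : Set X // FinNonUrysohn A})
  exact h1.trans le_add_self

lemma aux_kappa : ℵ₀ ≤ kappaInv X ∧ ∀ x : X, ∃ V : Set (Set X), #↥V ≤ kappaInv X ∧
    (∀ W ∈ V, IsClosed W ∧ W ∈ nhds x) ∧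
    ∀ U : Set X, IsOpen U → x ∈ U → ∃ W ∈ V, W ⊆ closure U := by
  show kappaInv X ∈ {κ : Cardinal.{u} | ℵ₀ ≤ κ ∧ ∀ x : X, ∃ V : Set (Set X), #↥V ≤ κ ∧
    (∀ W ∈ V, IsClosed W ∧ W ∈ nhds x) ∧
    ∀ U : Set X, IsOpen U → x ∈ U → ∃ W ∈ V, W ⊆ closure U}
  unfold kappaInv
  apply csInf_mem
  refine ⟨max ℵ₀ (2 ^ #X), le_max_left _ _, fun x => ?_⟩
  refine ⟨{C | ∃ U : Set X, IsOpen U ∧ x ∈ U ∧ C = closure U}, ?_, ?_, ?_⟩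
  · calc #↥{C | ∃ U : Set X, IsOpen U ∧ x ∈ U ∧ C = closure U}
        ≤ #(Set X) := mk_set_le _
      _ = 2 ^ #X := mk_set
      _ ≤ _ := le_max_right _ _
  · rintro W ⟨U, hU, hxU, rfl⟩
    exact ⟨isClosed_closure, Filter.mem_of_superset (hU.mem_nhds hxU) subset_closure⟩
  · intro U hU hxU
    exact ⟨closure U, ⟨U, hU, hxU, rfl⟩, subset_rfl⟩

end Aux

theorem statement6 [TopologicalSpace X] (A : Set X) :
    #↥(thetaCl A) ≤ #↥A ^ kappaInv X * nuNumber X := by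
  classical
  obtain ⟨hκinf, hVex⟩ := aux_kappa (X := X)
  set κ := kappaInv X with hκ
  rcases eq_empty_or_nonempty (thetaCl A) with hemp | ⟨x₀, hx₀⟩
  · rw [hemp]; simp
  have hAne : A.Nonempty := by
    obtain ⟨b, _, hb⟩ := hx₀ univ isOpen_univ (mem_univ _)
    exact ⟨b, hb⟩
  haveI hAnty : Nonempty ↥A := hAne.to_subtype
  rcases le_or_gt #↥A 1 with hA1 | hA2
  · -- A is a subsingleton
    have hsub : A.Subsingleton := Cardinal.mk_le_one_iff_set_subsingleton.1 hA1
    obtain ⟨a, ha⟩ := hAne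
    have hfnu : FinNonUrysohn (thetaCl A) := by
      refine ⟨⟨x₀, hx₀⟩, ?_⟩
      intro F hF hFne hFfin U hU
      refine ⟨a, mem_iInter₂.2 fun z hz => ?_⟩
      obtain ⟨b, hb1, hb2⟩ := (hF hz) (U z) (hU z hz).1 (hU z hz).2
      rwa [hsub hb2 ha] at hb1
    have h2 : (1 : Cardinal) ≤ #↥A ^ κ :=
      Cardinal.one_le_iff_ne_zero.2 (Cardinal.power_ne_zero _ (Cardinal.mk_ne_zero _))
    calc #↥(thetaCl A) ≤ nuNumber X := aux_mk_le_nu hfnu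
      _ = 1 * nuNumber X := (one_mul _).symm
      _ ≤ #↥A ^ κ * nuNumber X := mul_le_mul_left h2 _
  · -- main case: #A ≥ 2
    choose V hVcard hVcl hVcof using hVex
    have hVnty : ∀ x : X, Nonempty ↥(V x) := by
      intro x
      obtain ⟨W, hW, -⟩ := hVcof x univ isOpen_univ (mem_univ x)
      exact ⟨⟨W, hW⟩⟩
    set K := κ.out with hK
    have hmkK : #K = κ := mk_out κ
    haveI hKnty : Nonempty K := Cardinal.mk_ne_zero_iff.1 (by
      rw [hmkK]; exact (aleph0_pos.trans_le hκinf).ne')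
    have hemb : ∀ x : X, ∃ f : ↥(V x) → K, Function.Injective f := by
      intro x
      have h : #↥(V x) ≤ #K := by rw [hmkK]; exact hVcard x
      obtain ⟨f⟩ := Cardinal.le_def _ _ |>.1 h
      exact ⟨f, f.injective⟩
    choose emb hembinj using hemb
    let e : X → K → Set X := fun x k =>
      ((@Function.invFun _ _ (hVnty x) (emb x)) k : Set X)
    have he_mem : ∀ x k, e x k ∈ V x := fun x k =>
      ((@Function.invFun _ _ (hVnty x) (emb x)) k).2
    have he_surj : ∀ x : X, ∀ W ∈ V x, ∃ k, e x k = W := by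
      intro x W hW
      refine ⟨emb x ⟨W, hW⟩, ?_⟩
      have h := @Function.leftInverse_invFun _ _ (hVnty x) _ (hembinj x) ⟨W, hW⟩
      simpa [e] using congrArg Subtype.val h
    have he_cl : ∀ x k, IsClosed (e x k) := fun x k => (hVcl x _ (he_mem x k)).1
    have he_nhds : ∀ x k, e x k ∈ nhds x := fun x k => (hVcl x _ (he_mem x k)).2
    have hkey : ∀ x : X, ∀ N : Set X, IsClosed N → N ∈ nhds x → ∃ k, e x k ⊆ N := by
      intro x N hNc hNx
      obtain ⟨W, hW, hWsub⟩ :=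
        hVcof x (interior N) isOpen_interior (mem_interior_iff_mem_nhds.2 hNx)
      obtain ⟨k, hk⟩ := he_surj x W hW
      exact ⟨k, hk ▸ hWsub.trans (closure_minimal interior_subset hNc)⟩
    have hsel' : ∀ (x : ↥(thetaCl A)) (k : K), ∃ b : ↥A, (b : X) ∈ e (x : X) k := by
      intro x k
      obtain ⟨Uo, hUo_sub, hUo_open, hxUo⟩ := mem_nhds_iff.1 (he_nhds (x : X) k)
      obtain ⟨b, hb1, hb2⟩ := x.2 Uo hUo_open hxUo
      exact ⟨⟨b, hb2⟩, closure_minimal hUo_sub (he_cl (x : X) k) hb1⟩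
    choose a ha using hsel'
    let σ : ↥(thetaCl A) → K → Set K := fun x i => {j | (a x j : X) ∈ e (x : X) i}
    let C := (K → ↥A) × (K → Set K)
    let Fib : C → Set X := fun c =>
      {y | ∃ h : y ∈ thetaCl A, a ⟨y, h⟩ = c.1 ∧ σ ⟨y, h⟩ = c.2}
    have hcover : thetaCl A ⊆ ⋃ c : C, Fib c := fun y hy =>
      mem_iUnion.2 ⟨(a ⟨y, hy⟩, σ ⟨y, hy⟩), hy, rfl, rfl⟩
    have hfib : ∀ c : C, (Fib c).Nonempty → FinNonUrysohn (Fib c) := by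
      rintro ⟨f, S⟩ hne
      refine ⟨hne, ?_⟩
      intro F hFsub hFne hFfin U hU
      obtain ⟨z₀, hz₀F⟩ := hFne
      obtain ⟨hz₀, hz₀a, hz₀σ⟩ := hFsub hz₀F
      have hidx : ∀ z ∈ F, ∃ i : K, e z i ⊆ closure (U z) := by
        intro z hz
        obtain ⟨W, hW, hWs⟩ := hVcof z (U z) (hU z hz).1 (hU z hz).2
        obtain ⟨i, hi⟩ := he_surj z W hW
        exact ⟨i, hi ▸ hWs⟩
      choose! i hi using hidx
      have hNc : IsClosed (⋂ z ∈ F, e z₀ (i z)) :=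
        isClosed_biInter fun z _ => he_cl z₀ (i z)
      have hNn : (⋂ z ∈ F, e z₀ (i z)) ∈ nhds z₀ :=
        (Filter.biInter_mem hFfin).2 fun z _ => he_nhds z₀ (i z)
      obtain ⟨k, hk⟩ := hkey z₀ _ hNc hNn
      refine ⟨(f k : X), mem_iInter₂.2 fun z hzF => ?_⟩
      obtain ⟨hz, hza, hzσ⟩ := hFsub hzF
      have h1 : (a ⟨z₀, hz₀⟩ k : X) ∈ e z₀ (i z) :=
        mem_iInter₂.1 (hk (ha ⟨z₀, hz₀⟩ k)) z hzF
      have h2 : k ∈ σ ⟨z₀, hz₀⟩ (i z) := h1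
      rw [hz₀σ, ← hzσ] at h2
      have h3 : (a ⟨z, hz⟩ k : X) ∈ e z (i z) := h2
      have h4 : (a ⟨z, hz⟩ k : X) = (f k : X) := congrArg Subtype.val (congrFun hza k)
      exact hi z hzF (h4 ▸ h3)
    have hFibcard : ∀ c : C, #↥(Fib c) ≤ nuNumber X := by
      intro c
      rcases eq_empty_or_nonempty (Fib c) with h | h
      · rw [h, Cardinal.mk_emptyCollection]
        exact zero_le
      · exact aux_mk_le_nu (hfib c h)
    have h2A : 2 ≤ #↥A := by
      rw [Cardinal.two_le_iff]
      obtain ⟨x, y, hxy⟩ := Cardinal.one_lt_iff_nontrivial.1 hA2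
      exact ⟨x, y, hxy⟩
    have hκ2 : ℵ₀ ≤ (2 : Cardinal) ^ κ := hκinf.trans (Cardinal.cantor κ).le
    have hκA : (2 : Cardinal) ^ κ ≤ #↥A ^ κ := Cardinal.power_le_power_right h2A
    have hmkC : #C ≤ #↥A ^ κ := by
      have hC : #C = #↥A ^ κ * 2 ^ κ := by
        simp only [C, Cardinal.mk_prod, Cardinal.lift_id]
        rw [← Cardinal.power_def, ← Cardinal.power_def, hmkK, Cardinal.mk_set, hmkK,
          ← Cardinal.power_mul, Cardinal.mul_eq_self hκinf]
      rw [hC]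
      calc #↥A ^ κ * 2 ^ κ ≤ #↥A ^ κ * #↥A ^ κ := mul_le_mul_right hκA _
        _ = #↥A ^ κ := Cardinal.mul_eq_self (hκ2.trans hκA)
    calc #↥(thetaCl A) ≤ #↥(⋃ c : C, Fib c) := Cardinal.mk_le_mk_of_subset hcover
      _ ≤ #C * ⨆ c : C, #↥(Fib c) := Cardinal.mk_iUnion_le _
      _ ≤ #C * nuNumber X := mul_le_mul_right (ciSup_le' hFibcard) _
      _ ≤ #↥A ^ κ * nuNumber X := mul_le_mul_left hmkC _
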